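/- Let (T,ν) be a σ-finite measure space, let p, q ≥ 1 be integers and 0 ≤ r ≤ min(p,q). Let f₁, f₃ ∈ L²(ν^{⊗p}) and f₂, f₄ ∈ L²(ν^{⊗q}) be symmetric, and assume all the iterated integrals below converge absolutely. Then ⟨f₁ ⊗_r f₂, f₃ ⊗_r f₄⟩_{L²(T^{p+q−2r})} = ⟨f₁ ⊗_{p−r} f₃, f₂ ⊗_{q−r} f₄⟩_{L²(T^{2r})}. -/

import Mathlib

open MeasureTheory

/-- The way the first `r` coordinates (integration variables `u`) and the remaining `p − r`
coordinates (the first block of the free variables `t`) are combined into an argument of a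
function on `T^p`, when forming the contraction `f ⊗_r g` with `f` on `T^p`, `g` on `T^q`. -/
def glueLeft {T : Type*} (p q r : ℕ) (hrp : r ≤ p) (hrq : r ≤ q)
    (u : Fin r → T) (t : Fin (p + q - 2 * r) → T) : Fin p → T :=
  fun i => if h : (i : ℕ) < r then u ⟨i, h⟩
    else t ⟨(i : ℕ) - r, by have := i.isLt; omega⟩

/-- The way the first `r` coordinates (integration variables `u`) and the last `q − r`
coordinates (the second block of the free variables `t`) are combined into an argument of a
function on `T^q`, when forming the contraction `f ⊗_r g` with `f` on `T^p`, `g` on `T^q`. -/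
def glueRight {T : Type*} (p q r : ℕ) (hrp : r ≤ p) (hrq : r ≤ q)
    (u : Fin r → T) (t : Fin (p + q - 2 * r) → T) : Fin q → T :=
  fun j => if h : (j : ℕ) < r then u ⟨j, h⟩
    else t ⟨(p - r) + ((j : ℕ) - r), by have := j.isLt; omega⟩

/-- The `r`-th contraction `f ⊗_r g` of `f : T^p → ℝ` and `g : T^q → ℝ`:
`(f ⊗_r g)(t₁,…,t_{p+q−2r}) = ∫_{T^r} f(u, t₁,…,t_{p−r}) g(u, t_{p−r+1},…,t_{p+q−2r}) dν^{⊗r}(u)`. -/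
noncomputable def contraction {T : Type*} [MeasurableSpace T] (ν : Measure T)
    (p q r : ℕ) (hrp : r ≤ p) (hrq : r ≤ q)
    (f : (Fin p → T) → ℝ) (g : (Fin q → T) → ℝ) :
    (Fin (p + q - 2 * r) → T) → ℝ :=
  fun t => ∫ u : Fin r → T,
    f (glueLeft p q r hrp hrq u t) * g (glueRight p q r hrp hrq u t)
      ∂(Measure.pi fun _ => ν)

/-- A function on `T^n` is symmetric if it is almost everywhere invariant under permutations
of its arguments. -/
def AESymmetric {T : Type*} [MeasurableSpace T] (ν : Measure T) {n : ℕ}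
    (f : (Fin n → T) → ℝ) : Prop :=
  ∀ σ : Equiv.Perm (Fin n),
    (fun x => f (x ∘ σ)) =ᵐ[Measure.pi fun _ : Fin n => ν] f

noncomputable def finSplit (T : Type*) [MeasurableSpace T] (m n N : ℕ) (h : N = m + n) :
    (Fin N → T) ≃ᵐ (Fin m → T) × (Fin n → T) :=
  (MeasurableEquiv.piCongrLeft (fun _ : Fin N => T)
      (finSumFinEquiv.trans (finCongr h.symm))).symm.trans
    (MeasurableEquiv.sumPiEquivProdPi fun _ => T)

lemma finSplit_apply {T : Type*} [MeasurableSpace T] (m n N : ℕ) (h : N = m + n)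
    (f : Fin N → T) :
    finSplit T m n N h f =
      (fun i : Fin m => f ⟨i, by omega⟩, fun j : Fin n => f ⟨m + j, by omega⟩) := by
  ext i <;> simp [finSplit, MeasurableEquiv.sumPiEquivProdPi, Equiv.sumPiEquivProdPi,
    MeasurableEquiv.piCongrLeft, Equiv.piCongrLeft, finCongr, Fin.cast]

lemma finSplit_symm_apply {T : Type*} [MeasurableSpace T] (m n N : ℕ) (h : N = m + n)
    (w : Fin m → T) (x : Fin n → T) :
    (finSplit T m n N h).symm (w, x) =
      fun i : Fin N => if h' : (i : ℕ) < m then w ⟨i, h'⟩ else x ⟨(i : ℕ) - m, by omega⟩ := by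
  have key : finSplit T m n N h
      (fun i : Fin N => if h' : (i : ℕ) < m then w ⟨i, h'⟩ else x ⟨(i : ℕ) - m, by omega⟩)
      = (w, x) := by
    rw [finSplit_apply]
    refine Prod.ext ?_ ?_ <;> funext i <;> simp only
    · rw [dif_pos i.isLt]
    · rw [dif_neg (by simp)]
      congr 1
      ext
      simp
  rw [← key, MeasurableEquiv.symm_apply_apply]

lemma measurePreserving_finSplit {T : Type*} [MeasurableSpace T] (ν : Measure T) [SigmaFinite ν]
    (m n N : ℕ) (h : N = m + n) :
    MeasurePreserving (finSplit T m n N h) (Measure.pi fun _ : Fin N => ν)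
      ((Measure.pi fun _ : Fin m => ν).prod (Measure.pi fun _ : Fin n => ν)) := by
  have h1 := (measurePreserving_piCongrLeft (fun _ : Fin N => ν)
    (finSumFinEquiv.trans (finCongr h.symm))).symm _
  have h2 := (measurePreserving_sumPiEquivProdPi_symm
    (fun _ : Fin m ⊕ Fin n => ν)).symm _
  exact h2.comp h1

def rotPerm (n k : ℕ) (hk : k ≤ n) : Equiv.Perm (Fin n) where
  toFun i := if h : (i : ℕ) < n - k then ⟨(i : ℕ) + k, by omega⟩
    else ⟨(i : ℕ) - (n - k), by have := i.isLt; omega⟩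
  invFun j := if h : (j : ℕ) < k then ⟨(j : ℕ) + (n - k), by omega⟩
    else ⟨(j : ℕ) - k, by have := j.isLt; omega⟩
  left_inv i := by
    have hi := i.isLt
    by_cases h : (i : ℕ) < n - k <;> simp only [h, dite_true, dite_false] <;>
      split_ifs with h2 <;> (ext; simp_all) <;> omega
  right_inv j := by
    have hj := j.isLt
    by_cases h : (j : ℕ) < k <;> simp only [h, dite_true, dite_false] <;>
      split_ifs with h2 <;> (ext; simp_all) <;> omega

lemma QuasiMeasurePreserving.prodMap' {α β γ δ : Type*} [MeasurableSpace α] [MeasurableSpace β]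
    [MeasurableSpace γ] [MeasurableSpace δ] {μa : Measure α} {μb : Measure β} {μc : Measure γ}
    {μd : Measure δ} [SFinite μa] [SFinite μc] [SFinite μd] {f : α → β} {g : γ → δ}
    (hf : Measure.QuasiMeasurePreserving f μa μb)
    (hg : Measure.QuasiMeasurePreserving g μc μd) :
    Measure.QuasiMeasurePreserving (Prod.map f g) (μa.prod μc) (μb.prod μd) :=
  ⟨hf.measurable.prodMap hg.measurable, by
    rw [← Measure.map_prod_map _ _ hf.measurable hg.measurable]
    exact hf.absolutelyContinuous.prod hg.absolutelyContinuous⟩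

section keys
variable {T : Type*} [MeasurableSpace T]

lemma keyA (p q r : ℕ) (hrp : r ≤ p) (hrq : r ≤ q)
    (hpq : p + q - 2 * r = (p - r) + (q - r)) (hpr : p = r + (p - r))
    (a : Fin r → T) (w : Fin (p - r) → T) (x : Fin (q - r) → T) :
    glueLeft p q r hrp hrq a ((finSplit T (p - r) (q - r) (p + q - 2 * r) hpq).symm (w, x))
      = (finSplit T r (p - r) p hpr).symm (a, w) := by
  rw [finSplit_symm_apply, finSplit_symm_apply]
  funext i
  simp only [glueLeft]
  by_cases h : (i : ℕ) < r
  · rw [dif_pos h, dif_pos h]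
  · rw [dif_neg h, dif_neg h, dif_pos (by have := i.isLt; omega)]

lemma keyB (p q r : ℕ) (hrp : r ≤ p) (hrq : r ≤ q)
    (hpq : p + q - 2 * r = (p - r) + (q - r)) (hqr : q = r + (q - r))
    (a : Fin r → T) (w : Fin (p - r) → T) (x : Fin (q - r) → T) :
    glueRight p q r hrp hrq a ((finSplit T (p - r) (q - r) (p + q - 2 * r) hpq).symm (w, x))
      = (finSplit T r (q - r) q hqr).symm (a, x) := by
  rw [finSplit_symm_apply, finSplit_symm_apply]
  funext j
  simp only [glueRight]
  by_cases h : (j : ℕ) < r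
  · rw [dif_pos h, dif_pos h]
  · rw [dif_neg h, dif_neg h, dif_neg (by omega)]
    congr 1
    ext
    simp <;> omega

lemma keyL (n r : ℕ) (hrn : r ≤ n) (h1 h2 : n - r ≤ n)
    (hc : n + n - 2 * (n - r) = 2 * r) (hnr : n = r + (n - r)) (h2r : 2 * r = r + r)
    (s : Fin (2 * r) → T) (w : Fin (n - r) → T) :
    glueLeft n n (n - r) h1 h2 w (fun i => s (Fin.cast hc i))
      = (finSplit T r (n - r) n hnr).symm ((finSplit T r r (2 * r) h2r s).1, w)
          ∘ ⇑(rotPerm n r hrn) := by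
  rw [finSplit_apply, finSplit_symm_apply]
  funext i
  by_cases h : (i : ℕ) < n - r
  · simp only [glueLeft, Function.comp_apply, rotPerm, Equiv.coe_fn_mk, h, dite_true]
    rw [dif_neg (by omega)]
    congr 1
    ext
    simp <;> omega
  · simp only [glueLeft, Function.comp_apply, rotPerm, Equiv.coe_fn_mk, h, dite_false]
    rw [dif_pos (by have := i.isLt; omega)]
    exact congrArg s (Fin.ext (by simp))

lemma keyR (n r : ℕ) (hrn : r ≤ n) (h1 h2 : n - r ≤ n)
    (hc : n + n - 2 * (n - r) = 2 * r) (hnr : n = r + (n - r)) (h2r : 2 * r = r + r)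
    (s : Fin (2 * r) → T) (w : Fin (n - r) → T) :
    glueRight n n (n - r) h1 h2 w (fun i => s (Fin.cast hc i))
      = (finSplit T r (n - r) n hnr).symm ((finSplit T r r (2 * r) h2r s).2, w)
          ∘ ⇑(rotPerm n r hrn) := by
  rw [finSplit_apply, finSplit_symm_apply]
  funext i
  by_cases h : (i : ℕ) < n - r
  · simp only [glueRight, Function.comp_apply, rotPerm, Equiv.coe_fn_mk, h, dite_true]
    rw [dif_neg (by omega)]
    congr 1
    ext
    simp <;> omega
  · simp only [glueRight, Function.comp_apply, rotPerm, Equiv.coe_fn_mk, h, dite_false]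
    rw [dif_pos (by have := i.isLt; omega)]
    exact congrArg s (Fin.ext (by simp <;> omega))

end keys

lemma qmp_mergeHalf {T : Type*} [MeasurableSpace T] (ν : Measure T) [SigmaFinite ν]
    {β : Type*} [MeasurableSpace β] {μβ : Measure β} [SFinite μβ]
    (n r : ℕ) (hnr : n = r + (n - r)) (h2r : 2 * r = r + r)
    (pr : (Fin (2 * r) → T) → (Fin r → T))
    (hpr : Measure.QuasiMeasurePreserving pr (Measure.pi fun _ : Fin (2 * r) => ν)
      (Measure.pi fun _ : Fin r => ν))
    (g : β → (Fin (n - r) → T))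
    (hg : Measure.QuasiMeasurePreserving g μβ (Measure.pi fun _ : Fin (n - r) => ν)) :
    Measure.QuasiMeasurePreserving
      (fun z : (Fin (2 * r) → T) × β => (finSplit T r (n - r) n hnr).symm (pr z.1, g z.2))
      ((Measure.pi fun _ : Fin (2 * r) => ν).prod μβ) (Measure.pi fun _ : Fin n => ν) :=
  ((measurePreserving_finSplit ν r (n - r) n hnr).symm _).quasiMeasurePreserving.comp
    (QuasiMeasurePreserving.prodMap' hpr hg)

theorem stmt11 {T : Type*} [MeasurableSpace T] (ν : Measure T) [SigmaFinite ν]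
    (p q r : ℕ) (hp : 1 ≤ p) (hq : 1 ≤ q) (hrp : r ≤ p) (hrq : r ≤ q)
    (f₁ f₃ : (Fin p → T) → ℝ) (f₂ f₄ : (Fin q → T) → ℝ)
    (hf₁ : MemLp f₁ 2 (Measure.pi fun _ : Fin p => ν))
    (hf₃ : MemLp f₃ 2 (Measure.pi fun _ : Fin p => ν))
    (hf₂ : MemLp f₂ 2 (Measure.pi fun _ : Fin q => ν))
    (hf₄ : MemLp f₄ 2 (Measure.pi fun _ : Fin q => ν))
    (hs₁ : AESymmetric ν f₁) (hs₃ : AESymmetric ν f₃)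
    (hs₂ : AESymmetric ν f₂) (hs₄ : AESymmetric ν f₄)
    -- absolute convergence of the iterated integrals:
    (habs : Integrable
      (fun w : ((Fin (p + q - 2 * r) → T) × (Fin r → T) × (Fin r → T)) =>
        f₁ (glueLeft p q r hrp hrq w.2.1 w.1) * f₂ (glueRight p q r hrp hrq w.2.1 w.1) *
        (f₃ (glueLeft p q r hrp hrq w.2.2 w.1) * f₄ (glueRight p q r hrp hrq w.2.2 w.1)))
      ((Measure.pi fun _ : Fin (p + q - 2 * r) => ν).prod
        ((Measure.pi fun _ : Fin r => ν).prod (Measure.pi fun _ : Fin r => ν)))) :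
    ∫ t : Fin (p + q - 2 * r) → T,
        contraction ν p q r hrp hrq f₁ f₂ t * contraction ν p q r hrp hrq f₃ f₄ t
        ∂(Measure.pi fun _ => ν)
      = ∫ s : Fin (2 * r) → T,
          contraction ν p p (p - r) (Nat.sub_le p r) (Nat.sub_le p r) f₁ f₃
            (fun i => s (Fin.cast (by omega) i)) *
          contraction ν q q (q - r) (Nat.sub_le q r) (Nat.sub_le q r) f₂ f₄
            (fun i => s (Fin.cast (by omega) i))
          ∂(Measure.pi fun _ => ν) := by
  have h2r : 2 * r = r + r := by omega
  have hpq : p + q - 2 * r = (p - r) + (q - r) := by omega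
  have hpr2 : p = r + (p - r) := by omega
  have hqr2 : q = r + (q - r) := by omega
  have hcp : p + p - 2 * (p - r) = 2 * r := by omega
  have hcq : q + q - 2 * (q - r) = 2 * r := by omega
  set μA := (Measure.pi fun _ : Fin (p + q - 2 * r) => ν) with hμA
  set μB := (Measure.pi fun _ : Fin r => ν) with hμB
  set μC := (Measure.pi fun _ : Fin (2 * r) => ν) with hμC
  set μD := (Measure.pi fun _ : Fin (p - r) => ν) with hμD
  set μE := (Measure.pi fun _ : Fin (q - r) => ν) with hμE
  set M := μC.prod (μD.prod μE) with hM
  -- the measure preserving reshuffling equivalence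
  set e : ((Fin (2 * r) → T) × ((Fin (p - r) → T) × (Fin (q - r) → T))) ≃ᵐ
      ((Fin (p + q - 2 * r) → T) × ((Fin r → T) × (Fin r → T))) :=
    ((finSplit T r r (2 * r) h2r).prodCongr
        (finSplit T (p - r) (q - r) (p + q - 2 * r) hpq).symm).trans
      MeasurableEquiv.prodComm with he
  have mp_e : MeasurePreserving e M (μA.prod (μB.prod μB)) := by
    have h1 := (measurePreserving_finSplit ν r r (2 * r) h2r).prod
      ((measurePreserving_finSplit ν (p - r) (q - r) (p + q - 2 * r) hpq).symm _)
    exact Measure.measurePreserving_swap.comp h1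
  -- quasi measure preserving projections
  have qsplit := (measurePreserving_finSplit ν r r (2 * r) h2r).quasiMeasurePreserving
  have qpr1 : Measure.QuasiMeasurePreserving
      (fun s : Fin (2 * r) → T => (finSplit T r r (2 * r) h2r s).1) μC μB :=
    Measure.quasiMeasurePreserving_fst.comp qsplit
  have qpr2 : Measure.QuasiMeasurePreserving
      (fun s : Fin (2 * r) → T => (finSplit T r r (2 * r) h2r s).2) μC μB :=
    Measure.quasiMeasurePreserving_snd.comp qsplit
  have qF₁ : Measure.QuasiMeasurePreserving
      (fun z : (Fin (2 * r) → T) × ((Fin (p - r) → T) × (Fin (q - r) → T)) =>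
        (finSplit T r (p - r) p hpr2).symm ((finSplit T r r (2 * r) h2r z.1).1, z.2.1))
      M (Measure.pi fun _ : Fin p => ν) :=
    qmp_mergeHalf ν p r hpr2 h2r _ qpr1 _ Measure.quasiMeasurePreserving_fst
  have qF₃ : Measure.QuasiMeasurePreserving
      (fun z : (Fin (2 * r) → T) × ((Fin (p - r) → T) × (Fin (q - r) → T)) =>
        (finSplit T r (p - r) p hpr2).symm ((finSplit T r r (2 * r) h2r z.1).2, z.2.1))
      M (Measure.pi fun _ : Fin p => ν) :=
    qmp_mergeHalf ν p r hpr2 h2r _ qpr2 _ Measure.quasiMeasurePreserving_fst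
  have qF₂ : Measure.QuasiMeasurePreserving
      (fun z : (Fin (2 * r) → T) × ((Fin (p - r) → T) × (Fin (q - r) → T)) =>
        (finSplit T r (q - r) q hqr2).symm ((finSplit T r r (2 * r) h2r z.1).1, z.2.2))
      M (Measure.pi fun _ : Fin q => ν) :=
    qmp_mergeHalf ν q r hqr2 h2r _ qpr1 _ Measure.quasiMeasurePreserving_snd
  have qF₄ : Measure.QuasiMeasurePreserving
      (fun z : (Fin (2 * r) → T) × ((Fin (p - r) → T) × (Fin (q - r) → T)) =>
        (finSplit T r (q - r) q hqr2).symm ((finSplit T r r (2 * r) h2r z.1).2, z.2.2))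
      M (Measure.pi fun _ : Fin q => ν) :=
    qmp_mergeHalf ν q r hqr2 h2r _ qpr2 _ Measure.quasiMeasurePreserving_snd
  have a₁ := qF₁.ae_eq_comp (hs₁ (rotPerm p r hrp))
  have a₃ := qF₃.ae_eq_comp (hs₃ (rotPerm p r hrp))
  have a₂ := qF₂.ae_eq_comp (hs₂ (rotPerm q r hrq))
  have a₄ := qF₄.ae_eq_comp (hs₄ (rotPerm q r hrq))
  have main : (fun z : (Fin (2 * r) → T) × ((Fin (p - r) → T) × (Fin (q - r) → T)) =>
        (f₁ ((finSplit T r (p - r) p hpr2).symm ((finSplit T r r (2 * r) h2r z.1).1, z.2.1)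
            ∘ ⇑(rotPerm p r hrp)) *
         f₃ ((finSplit T r (p - r) p hpr2).symm ((finSplit T r r (2 * r) h2r z.1).2, z.2.1)
            ∘ ⇑(rotPerm p r hrp))) *
        (f₂ ((finSplit T r (q - r) q hqr2).symm ((finSplit T r r (2 * r) h2r z.1).1, z.2.2)
            ∘ ⇑(rotPerm q r hrq)) *
         f₄ ((finSplit T r (q - r) q hqr2).symm ((finSplit T r r (2 * r) h2r z.1).2, z.2.2)
            ∘ ⇑(rotPerm q r hrq))))
      =ᵐ[M] (fun z =>
        (f₁ ((finSplit T r (p - r) p hpr2).symm ((finSplit T r r (2 * r) h2r z.1).1, z.2.1)) *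
         f₃ ((finSplit T r (p - r) p hpr2).symm ((finSplit T r r (2 * r) h2r z.1).2, z.2.1))) *
        (f₂ ((finSplit T r (q - r) q hqr2).symm ((finSplit T r r (2 * r) h2r z.1).1, z.2.2)) *
         f₄ ((finSplit T r (q - r) q hqr2).symm ((finSplit T r r (2 * r) h2r z.1).2, z.2.2)))) :=
    (a₁.mul a₃).mul (a₂.mul a₄)
  have hL : (fun z : (Fin (2 * r) → T) × ((Fin (p - r) → T) × (Fin (q - r) → T)) =>
        f₁ (glueLeft p q r hrp hrq (e z).2.1 (e z).1) *
          f₂ (glueRight p q r hrp hrq (e z).2.1 (e z).1) *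
        (f₃ (glueLeft p q r hrp hrq (e z).2.2 (e z).1) *
          f₄ (glueRight p q r hrp hrq (e z).2.2 (e z).1)))
      = (fun z =>
        (f₁ ((finSplit T r (p - r) p hpr2).symm ((finSplit T r r (2 * r) h2r z.1).1, z.2.1)) *
         f₃ ((finSplit T r (p - r) p hpr2).symm ((finSplit T r r (2 * r) h2r z.1).2, z.2.1))) *
        (f₂ ((finSplit T r (q - r) q hqr2).symm ((finSplit T r r (2 * r) h2r z.1).1, z.2.2)) *
         f₄ ((finSplit T r (q - r) q hqr2).symm ((finSplit T r r (2 * r) h2r z.1).2, z.2.2)))) := by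
    funext z
    obtain ⟨s, w, x⟩ := z
    show f₁ (glueLeft p q r hrp hrq ((finSplit T r r (2 * r) h2r s).1)
          ((finSplit T (p - r) (q - r) (p + q - 2 * r) hpq).symm (w, x))) *
        f₂ (glueRight p q r hrp hrq ((finSplit T r r (2 * r) h2r s).1)
          ((finSplit T (p - r) (q - r) (p + q - 2 * r) hpq).symm (w, x))) *
        (f₃ (glueLeft p q r hrp hrq ((finSplit T r r (2 * r) h2r s).2)
          ((finSplit T (p - r) (q - r) (p + q - 2 * r) hpq).symm (w, x))) *
         f₄ (glueRight p q r hrp hrq ((finSplit T r r (2 * r) h2r s).2)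
          ((finSplit T (p - r) (q - r) (p + q - 2 * r) hpq).symm (w, x)))) = _
    rw [keyA p q r hrp hrq hpq hpr2, keyA p q r hrp hrq hpq hpr2,
      keyB p q r hrp hrq hpq hqr2, keyB p q r hrp hrq hpq hqr2]
    exact mul_mul_mul_comm _ _ _ _
  have hR : (fun z : (Fin (2 * r) → T) × ((Fin (p - r) → T) × (Fin (q - r) → T)) =>
        (f₁ (glueLeft p p (p - r) (Nat.sub_le p r) (Nat.sub_le p r) z.2.1
            (fun i => z.1 (Fin.cast hcp i))) *
         f₃ (glueRight p p (p - r) (Nat.sub_le p r) (Nat.sub_le p r) z.2.1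
            (fun i => z.1 (Fin.cast hcp i)))) *
        (f₂ (glueLeft q q (q - r) (Nat.sub_le q r) (Nat.sub_le q r) z.2.2
            (fun i => z.1 (Fin.cast hcq i))) *
         f₄ (glueRight q q (q - r) (Nat.sub_le q r) (Nat.sub_le q r) z.2.2
            (fun i => z.1 (Fin.cast hcq i)))))
      = (fun z =>
        (f₁ ((finSplit T r (p - r) p hpr2).symm ((finSplit T r r (2 * r) h2r z.1).1, z.2.1)
            ∘ ⇑(rotPerm p r hrp)) *
         f₃ ((finSplit T r (p - r) p hpr2).symm ((finSplit T r r (2 * r) h2r z.1).2, z.2.1)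
            ∘ ⇑(rotPerm p r hrp))) *
        (f₂ ((finSplit T r (q - r) q hqr2).symm ((finSplit T r r (2 * r) h2r z.1).1, z.2.2)
            ∘ ⇑(rotPerm q r hrq)) *
         f₄ ((finSplit T r (q - r) q hqr2).symm ((finSplit T r r (2 * r) h2r z.1).2, z.2.2)
            ∘ ⇑(rotPerm q r hrq)))) := by
    funext z
    obtain ⟨s, w, x⟩ := z
    simp only
    rw [keyL p r hrp (Nat.sub_le p r) (Nat.sub_le p r) hcp hpr2 h2r,
      keyR p r hrp (Nat.sub_le p r) (Nat.sub_le p r) hcp hpr2 h2r,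
      keyL q r hrq (Nat.sub_le q r) (Nat.sub_le q r) hcq hqr2 h2r,
      keyR q r hrq (Nat.sub_le q r) (Nat.sub_le q r) hcq hqr2 h2r]
  have hae : (fun z : (Fin (2 * r) → T) × ((Fin (p - r) → T) × (Fin (q - r) → T)) =>
        f₁ (glueLeft p q r hrp hrq (e z).2.1 (e z).1) *
          f₂ (glueRight p q r hrp hrq (e z).2.1 (e z).1) *
        (f₃ (glueLeft p q r hrp hrq (e z).2.2 (e z).1) *
          f₄ (glueRight p q r hrp hrq (e z).2.2 (e z).1)))
      =ᵐ[M] (fun z =>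
        (f₁ (glueLeft p p (p - r) (Nat.sub_le p r) (Nat.sub_le p r) z.2.1
            (fun i => z.1 (Fin.cast hcp i))) *
         f₃ (glueRight p p (p - r) (Nat.sub_le p r) (Nat.sub_le p r) z.2.1
            (fun i => z.1 (Fin.cast hcp i)))) *
        (f₂ (glueLeft q q (q - r) (Nat.sub_le q r) (Nat.sub_le q r) z.2.2
            (fun i => z.1 (Fin.cast hcq i))) *
         f₄ (glueRight q q (q - r) (Nat.sub_le q r) (Nat.sub_le q r) z.2.2
            (fun i => z.1 (Fin.cast hcq i))))) := by
    rw [hL, hR]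
    exact main.symm
  have hHe : Integrable
      (fun z : (Fin (2 * r) → T) × ((Fin (p - r) → T) × (Fin (q - r) → T)) =>
        f₁ (glueLeft p q r hrp hrq (e z).2.1 (e z).1) *
          f₂ (glueRight p q r hrp hrq (e z).2.1 (e z).1) *
        (f₃ (glueLeft p q r hrp hrq (e z).2.2 (e z).1) *
          f₄ (glueRight p q r hrp hrq (e z).2.2 (e z).1))) M :=
    (mp_e.integrable_comp_emb e.measurableEmbedding).mpr habs
  have hIK : Integrable
      (fun z : (Fin (2 * r) → T) × ((Fin (p - r) → T) × (Fin (q - r) → T)) =>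
        (f₁ (glueLeft p p (p - r) (Nat.sub_le p r) (Nat.sub_le p r) z.2.1
            (fun i => z.1 (Fin.cast hcp i))) *
         f₃ (glueRight p p (p - r) (Nat.sub_le p r) (Nat.sub_le p r) z.2.1
            (fun i => z.1 (Fin.cast hcp i)))) *
        (f₂ (glueLeft q q (q - r) (Nat.sub_le q r) (Nat.sub_le q r) z.2.2
            (fun i => z.1 (Fin.cast hcq i))) *
         f₄ (glueRight q q (q - r) (Nat.sub_le q r) (Nat.sub_le q r) z.2.2
            (fun i => z.1 (Fin.cast hcq i))))) M :=
    hHe.congr hae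
  calc
    ∫ t : Fin (p + q - 2 * r) → T,
        contraction ν p q r hrp hrq f₁ f₂ t * contraction ν p q r hrp hrq f₃ f₄ t ∂μA
      = ∫ t : Fin (p + q - 2 * r) → T, ∫ z : (Fin r → T) × (Fin r → T),
          f₁ (glueLeft p q r hrp hrq z.1 t) * f₂ (glueRight p q r hrp hrq z.1 t) *
          (f₃ (glueLeft p q r hrp hrq z.2 t) * f₄ (glueRight p q r hrp hrq z.2 t))
          ∂(μB.prod μB) ∂μA := by
        refine integral_congr_ae (ae_of_all _ fun t => ?_)
        exact (integral_prod_mul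
          (fun u => f₁ (glueLeft p q r hrp hrq u t) * f₂ (glueRight p q r hrp hrq u t))
          (fun v => f₃ (glueLeft p q r hrp hrq v t) * f₄ (glueRight p q r hrp hrq v t))).symm
    _ = ∫ w : (Fin (p + q - 2 * r) → T) × ((Fin r → T) × (Fin r → T)),
          f₁ (glueLeft p q r hrp hrq w.2.1 w.1) * f₂ (glueRight p q r hrp hrq w.2.1 w.1) *
          (f₃ (glueLeft p q r hrp hrq w.2.2 w.1) * f₄ (glueRight p q r hrp hrq w.2.2 w.1))
          ∂(μA.prod (μB.prod μB)) :=
        integral_integral (by exact habs)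
    _ = ∫ z : (Fin (2 * r) → T) × ((Fin (p - r) → T) × (Fin (q - r) → T)),
          f₁ (glueLeft p q r hrp hrq (e z).2.1 (e z).1) *
            f₂ (glueRight p q r hrp hrq (e z).2.1 (e z).1) *
          (f₃ (glueLeft p q r hrp hrq (e z).2.2 (e z).1) *
            f₄ (glueRight p q r hrp hrq (e z).2.2 (e z).1)) ∂M :=
        (mp_e.integral_comp e.measurableEmbedding _).symm
    _ = ∫ z : (Fin (2 * r) → T) × ((Fin (p - r) → T) × (Fin (q - r) → T)),
          (f₁ (glueLeft p p (p - r) (Nat.sub_le p r) (Nat.sub_le p r) z.2.1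
              (fun i => z.1 (Fin.cast hcp i))) *
           f₃ (glueRight p p (p - r) (Nat.sub_le p r) (Nat.sub_le p r) z.2.1
              (fun i => z.1 (Fin.cast hcp i)))) *
          (f₂ (glueLeft q q (q - r) (Nat.sub_le q r) (Nat.sub_le q r) z.2.2
              (fun i => z.1 (Fin.cast hcq i))) *
           f₄ (glueRight q q (q - r) (Nat.sub_le q r) (Nat.sub_le q r) z.2.2
              (fun i => z.1 (Fin.cast hcq i)))) ∂M :=
        integral_congr_ae hae
    _ = ∫ s : Fin (2 * r) → T, ∫ wx : (Fin (p - r) → T) × (Fin (q - r) → T),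
          (f₁ (glueLeft p p (p - r) (Nat.sub_le p r) (Nat.sub_le p r) wx.1
              (fun i => s (Fin.cast hcp i))) *
           f₃ (glueRight p p (p - r) (Nat.sub_le p r) (Nat.sub_le p r) wx.1
              (fun i => s (Fin.cast hcp i)))) *
          (f₂ (glueLeft q q (q - r) (Nat.sub_le q r) (Nat.sub_le q r) wx.2
              (fun i => s (Fin.cast hcq i))) *
           f₄ (glueRight q q (q - r) (Nat.sub_le q r) (Nat.sub_le q r) wx.2
              (fun i => s (Fin.cast hcq i)))) ∂(μD.prod μE) ∂μC :=
        (integral_integral (f := fun (s : Fin (2 * r) → T)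
            (wx : (Fin (p - r) → T) × (Fin (q - r) → T)) =>
          (f₁ (glueLeft p p (p - r) (Nat.sub_le p r) (Nat.sub_le p r) wx.1
              (fun i => s (Fin.cast hcp i))) *
           f₃ (glueRight p p (p - r) (Nat.sub_le p r) (Nat.sub_le p r) wx.1
              (fun i => s (Fin.cast hcp i)))) *
          (f₂ (glueLeft q q (q - r) (Nat.sub_le q r) (Nat.sub_le q r) wx.2
              (fun i => s (Fin.cast hcq i))) *
           f₄ (glueRight q q (q - r) (Nat.sub_le q r) (Nat.sub_le q r) wx.2
              (fun i => s (Fin.cast hcq i))))) (by exact hIK)).symm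
    _ = ∫ s : Fin (2 * r) → T,
          (∫ u : Fin (p - r) → T,
            f₁ (glueLeft p p (p - r) (Nat.sub_le p r) (Nat.sub_le p r) u
              (fun i => s (Fin.cast hcp i))) *
            f₃ (glueRight p p (p - r) (Nat.sub_le p r) (Nat.sub_le p r) u
              (fun i => s (Fin.cast hcp i))) ∂μD) *
          (∫ v : Fin (q - r) → T,
            f₂ (glueLeft q q (q - r) (Nat.sub_le q r) (Nat.sub_le q r) v
              (fun i => s (Fin.cast hcq i))) *
            f₄ (glueRight q q (q - r) (Nat.sub_le q r) (Nat.sub_le q r) v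
              (fun i => s (Fin.cast hcq i))) ∂μE) ∂μC := by
        refine integral_congr_ae (ae_of_all _ fun s => ?_)
        exact integral_prod_mul
          (fun u : Fin (p - r) → T =>
            f₁ (glueLeft p p (p - r) (Nat.sub_le p r) (Nat.sub_le p r) u
              (fun i => s (Fin.cast hcp i))) *
            f₃ (glueRight p p (p - r) (Nat.sub_le p r) (Nat.sub_le p r) u
              (fun i => s (Fin.cast hcp i))))
          (fun v : Fin (q - r) → T =>
            f₂ (glueLeft q q (q - r) (Nat.sub_le q r) (Nat.sub_le q r) v
              (fun i => s (Fin.cast hcq i))) *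
            f₄ (glueRight q q (q - r) (Nat.sub_le q r) (Nat.sub_le q r) v
              (fun i => s (Fin.cast hcq i))))
    _ = ∫ s : Fin (2 * r) → T,
          contraction ν p p (p - r) (Nat.sub_le p r) (Nat.sub_le p r) f₁ f₃
            (fun i => s (Fin.cast (by omega) i)) *
          contraction ν q q (q - r) (Nat.sub_le q r) (Nat.sub_le q r) f₂ f₄
            (fun i => s (Fin.cast (by omega) i)) ∂μC := rfl
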